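/- Let Γ be a directed graph, C a set of measured nodes, i a node with out-neighbor set N_i^+, and suppose there exists a node set B with |B| = b < |N_i^+| such that every directed path from a node of N_i^+ to a node of C passes through B. Then for every matrix G consistent with Γ with (I−G) and (I−G_{PP}) invertible (P being the set of nodes not reachable from N_i^+ without passing through B and not in B), the matrix M with rows indexed by C and columns by N_i^+ given by M_{jk} = [(I−G)^{-1}]_{jk} has rank at most b; in particular M does not have full column rank |N_i^+|. -/

import Mathlib

/-- If every directed path from an out-neighbor of `i` to a measured node in
`C` passes through a set `B` with `|B| < |N_i⁺|`, then for every `G` consistent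
with the graph (with `I-G` and `I-G_{PP}` invertible, `P` the set of nodes
neither in `B` nor reachable from `N_i⁺` avoiding `B`), the matrix
`M_{jk} = [(I-G)⁻¹]_{jk}` (rows in `C`, columns in `N_i⁺`) has rank at most
`|B|` — in particular not full column rank. -/
theorem stmt14 {L : ℕ} {F : Type*} [Field F]
    (E : Fin L → Fin L → Prop) (i : Fin L)
    (Nplus C B P : Finset (Fin L))
    (hN : ∀ k, k ∈ Nplus ↔ E i k)
    (hb : B.card < Nplus.card)
    (hblock : ∀ l : List (Fin L), l ≠ [] → l.Chain' E →
      (∃ k ∈ Nplus, l.head? = some k) → (∃ j ∈ C, l.getLast? = some j) →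
      ∃ v ∈ l, v ∈ B)
    (hP : ∀ v, v ∈ P ↔ v ∉ B ∧
      ¬ ∃ l : List (Fin L), l ≠ [] ∧ l.Chain' E ∧
        (∃ k ∈ Nplus, l.head? = some k) ∧ l.getLast? = some v ∧ ∀ u ∈ l, u ∉ B)
    (G : Matrix (Fin L) (Fin L) F)
    (hG : ∀ a b, G a b ≠ 0 → E b a)
    (hinv : IsUnit (1 - G).det)
    (hinvPP : IsUnit (1 - Matrix.of (fun a b : ↥P => G a b)).det) :
    (Matrix.of (fun (j : ↥C) (k : ↥Nplus) => (1 - G)⁻¹ j k)).rank ≤ B.card ∧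
    (Matrix.of (fun (j : ↥C) (k : ↥Nplus) => (1 - G)⁻¹ j k)).rank < Nplus.card := by
  classical
  set reach : Fin L → Prop := fun v =>
    ∃ l : List (Fin L), l ≠ [] ∧ l.Chain' E ∧
        (∃ k ∈ Nplus, l.head? = some k) ∧ l.getLast? = some v ∧ ∀ u ∈ l, u ∉ B with hreach
  -- basic reachability facts
  have hreachN : ∀ k ∈ Nplus, k ∉ B → reach k := by
    intro k hk hkB
    exact ⟨[k], by simp, List.isChain_singleton k, ⟨k, hk, rfl⟩, rfl, by simpa⟩
  have hext : ∀ a b : Fin L, reach b → E b a → a ∉ B → reach a := by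
    intro a b ⟨l, hne, hch, hhd, hlast, havoid⟩ hE haB
    refine ⟨l ++ [a], by simp [hne], ?_, ?_, by simp, ?_⟩
    · rw [List.Chain', List.isChain_append]
      refine ⟨hch, List.isChain_singleton a, ?_⟩
      intro x hx y hy
      simp only [List.head?_cons, Option.mem_def, Option.some.injEq] at hy
      rw [hlast] at hx
      simp only [Option.mem_def, Option.some.injEq] at hx
      subst hx; subst hy; exact hE
    · obtain ⟨k, hk, hhd⟩ := hhd
      cases l with
      | nil => simp at hne
      | cons x t => exact ⟨k, hk, by simpa using hhd⟩
    · intro u hu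
      rcases List.mem_append.mp hu with h | h
      · exact havoid u h
      · simp only [List.mem_singleton] at h; subst h; exact haB
  have hCP : ∀ j ∈ C, j ∉ B → j ∈ P := by
    intro j hj hjB
    rw [hP]
    refine ⟨hjB, ?_⟩
    rintro ⟨l, hne, hch, hhd, hlast, havoid⟩
    obtain ⟨v, hv, hvB⟩ := hblock l hne hch hhd ⟨j, hj, hlast⟩
    exact havoid v hv hvB
  have hNP : ∀ k ∈ Nplus, k ∉ P := by
    intro k hk hkP
    rw [hP] at hkP
    exact hkP.2 (hreachN k hk hkP.1)
  have hPB : ∀ v ∈ P, v ∉ B := fun v hv => ((hP v).mp hv).1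
  -- G vanishes from S to P
  have hGPS : ∀ a ∈ P, ∀ v, v ∉ P → v ∉ B → G a v = 0 := by
    intro a ha v hvP hvB
    by_contra h
    have hrv : reach v := by
      rw [hP] at hvP
      push_neg at hvP
      exact hvP hvB
    have : reach a := hext a v hrv (hG a v h) (hPB a ha)
    rw [hP] at ha
    exact ha.2 this
  -- matrix setup
  set A : Matrix (Fin L) (Fin L) F := 1 - G with hAdef
  set X : Matrix (Fin L) (Fin L) F := A⁻¹ with hXdef
  have hAX : A * X = 1 := Matrix.mul_nonsing_inv A hinv
  set App : Matrix ↥P ↥P F := 1 - Matrix.of (fun a b : ↥P => G a b) with hAppdef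
  set Y : Matrix ↥P ↥P F := App⁻¹ with hYdef
  have hYA : Y * App = 1 := Matrix.nonsing_inv_mul App hinvPP
  have hAppA : ∀ (p q : ↥P), App p q = A (p : Fin L) (q : Fin L) := by
    intro p q
    simp only [hAppdef, hAdef, Matrix.sub_apply, Matrix.one_apply, Matrix.of_apply]
    congr 1
    simp only [Subtype.ext_iff]
  -- the key equation
  have star : ∀ (p : ↥P) (k : Fin L), k ∉ P →
      ∑ q : ↥P, App p q * X (q : Fin L) k = -∑ b : ↥B, A (p : Fin L) (b : Fin L) * X (b : Fin L) k := by
    intro p k hk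
    have h0 : ∑ v : Fin L, A (p : Fin L) v * X v k = 0 := by
      have := congrFun (congrFun hAX (p : Fin L)) k
      rw [Matrix.mul_apply] at this
      rw [this, Matrix.one_apply_ne]
      intro h; exact hk (h ▸ p.2)
    have hsplit : ∑ v ∈ P, A (p : Fin L) v * X v k + ∑ v ∈ Pᶜ, A (p : Fin L) v * X v k
        = ∑ v : Fin L, A (p : Fin L) v * X v k := Finset.sum_add_sum_compl P _
    have hBsub : B ⊆ Pᶜ := by
      intro v hv
      simp only [Finset.mem_compl]
      intro hvP; exact hPB v hvP hv
    have hcomp : ∑ v ∈ Pᶜ, A (p : Fin L) v * X v k = ∑ v ∈ B, A (p : Fin L) v * X v k := by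
      refine (Finset.sum_subset hBsub ?_).symm
      intro v hvPc hvB
      simp only [Finset.mem_compl] at hvPc
      have hG0 : G (p : Fin L) v = 0 := hGPS p p.2 v hvPc hvB
      have hne : (p : Fin L) ≠ v := by intro h; rw [← h] at hvPc; exact hvPc p.2
      simp [hAdef, Matrix.sub_apply, Matrix.one_apply_ne hne, hG0]
    have hPsum : ∑ q : ↥P, App p q * X (q : Fin L) k = ∑ v ∈ P, A (p : Fin L) v * X v k := by
      rw [← Finset.sum_coe_sort P (fun v => A (p : Fin L) v * X v k)]
      exact Finset.sum_congr rfl fun q _ => by rw [hAppA]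
    have hBsum : ∑ v ∈ B, A (p : Fin L) v * X v k
        = ∑ b : ↥B, A (p : Fin L) (b : Fin L) * X (b : Fin L) k :=
      (Finset.sum_coe_sort B _).symm
    rw [hPsum]
    rw [h0, hcomp, hBsum] at hsplit
    linear_combination hsplit
  have key : ∀ (a : ↥P) (k : Fin L), k ∉ P →
      X (a : Fin L) k = ∑ b : ↥B, (-∑ q : ↥P, Y a q * A (q : Fin L) (b : Fin L)) * X (b : Fin L) k := by
    intro a k hk
    have h1 : X (a : Fin L) k = ∑ p : ↥P, (Y * App) a p * X (p : Fin L) k := by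
      rw [hYA]
      rw [Finset.sum_eq_single a]
      · simp
      · intro q _ hq; simp [Matrix.one_apply_ne' (Ne.symm hq).symm, Matrix.one_apply_ne hq.symm]
      · simp
    rw [h1]
    simp only [Matrix.mul_apply, Finset.sum_mul]
    rw [Finset.sum_comm]
    have h2 : ∀ q : ↥P, ∑ p : ↥P, Y a q * App q p * X (p : Fin L) k
        = Y a q * -∑ b : ↥B, A (q : Fin L) (b : Fin L) * X (b : Fin L) k := by
      intro q
      rw [← star q k hk, Finset.mul_sum]
      exact Finset.sum_congr rfl fun p _ => by ring
    rw [Finset.sum_congr rfl fun q _ => h2 q]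
    simp only [mul_neg, neg_mul, Finset.mul_sum, Finset.sum_mul, ← Finset.sum_neg_distrib]
    rw [Finset.sum_comm]
    refine Finset.sum_congr rfl fun b _ => Finset.sum_congr rfl fun q _ => by ring
  -- factorization M = W * NM
  set W : Matrix ↥C ↥B F := Matrix.of (fun (j : ↥C) (b : ↥B) =>
    if hj : (j : Fin L) ∈ P then -∑ q : ↥P, Y ⟨(j : Fin L), hj⟩ q * A (q : Fin L) (b : Fin L)
    else if (j : Fin L) = (b : Fin L) then 1 else 0) with hW
  set NM : Matrix ↥B ↥Nplus F := Matrix.of (fun (b : ↥B) (k : ↥Nplus) => X (b : Fin L) (k : Fin L)) with hNM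
  have hfact : (Matrix.of (fun (j : ↥C) (k : ↥Nplus) => X (j : Fin L) (k : Fin L))) = W * NM := by
    ext j k
    have hkP : (k : Fin L) ∉ P := hNP k k.2
    rw [Matrix.mul_apply]
    by_cases hj : (j : Fin L) ∈ P
    · have hkey := key ⟨(j : Fin L), hj⟩ k hkP
      simp only [Matrix.of_apply, hW, hNM, dif_pos hj]
      exact hkey
    · have hjB : (j : Fin L) ∈ B := by
        by_contra h; exact hj (hCP j j.2 h)
      simp only [Matrix.of_apply, hW, hNM, dif_neg hj]
      rw [Finset.sum_eq_single (⟨(j : Fin L), hjB⟩ : ↥B)]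
      · simp
      · intro b _ hbne
        rw [if_neg, zero_mul]
        intro h; exact hbne (Subtype.ext h.symm)
      · simp
  have hrank : (Matrix.of (fun (j : ↥C) (k : ↥Nplus) => X (j : Fin L) (k : Fin L))).rank ≤ B.card := by
    rw [hfact]
    calc (W * NM).rank ≤ NM.rank := Matrix.rank_mul_le_right W NM
      _ ≤ Fintype.card ↥B := Matrix.rank_le_card_height NM
      _ = B.card := Fintype.card_coe B
  exact ⟨hrank, lt_of_le_of_lt hrank hb⟩
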